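/- Let A be a nonempty subset of the finite field F_q. Then there exist a set P of points in F_q^2 with |P| = |A+A|·|A·A| and a set L of lines in F_q^2 with |L| = |A|^2 such that the number of incidences between P and L is at least |A|^3. -/

import Mathlib

open Pointwise

/-- Elekes' construction: for `A ⊆ F_q` nonempty there are `|A+A||A·A|` points and `|A|²`
lines with at least `|A|³` incidences. -/
theorem elekes_construction {F : Type*} [Field F] [Fintype F] [DecidableEq F]
    (A : Finset F) (hA : A.Nonempty) :
    ∃ (P : Finset (F × F)) (L : Finset (Finset (F × F))),
      (∀ l ∈ L, ∃ a b c : F, (a, b) ≠ (0, 0) ∧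
        l = Finset.univ.filter (fun p : F × F => a * p.1 + b * p.2 = c)) ∧
      P.card = (A + A).card * (A * A).card ∧
      L.card = A.card ^ 2 ∧
      A.card ^ 3 ≤ ((P ×ˢ L).filter (fun pl => pl.1 ∈ pl.2)).card := by
  obtain ⟨a₀, ha₀A, ha₀⟩ : ∃ a₀ ∈ A, a₀ ≠ 0 ∨ ∀ x ∈ A, x = 0 := by
    by_cases h : ∃ x ∈ A, x ≠ 0
    · obtain ⟨x, hx, hx0⟩ := h; exact ⟨x, hx, Or.inl hx0⟩
    · push_neg at h; exact ⟨hA.choose, hA.choose_spec, Or.inr h⟩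
  set line : F → F → Finset (F × F) := fun a b =>
    Finset.univ.filter (fun p : F × F =>
      (if b = 0 then 1 else b) * p.1 + (if b = 0 then (0 : F) else -1) * p.2
        = if b = 0 then a + a₀ else b * a) with hline
  have hmem : ∀ (a b : F) (p : F × F), p ∈ line a b ↔
      (if b = 0 then 1 else b) * p.1 + (if b = 0 then (0 : F) else -1) * p.2
        = if b = 0 then a + a₀ else b * a := by
    intro a b p; simp [hline]
  have lineInj : ∀ a b a' b' : F, line a b = line a' b' → a = a' ∧ b = b' := by
    intro a b a' b' h
    by_cases hb : b = 0 <;> by_cases hb' : b' = 0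
    · refine ⟨?_, hb.trans hb'.symm⟩
      have h1 : ((a + a₀, (0 : F)) : F × F) ∈ line a b := by
        rw [hmem]; simp [hb]
      rw [h, hmem] at h1
      simp [hb'] at h1
      exact h1
    · exfalso
      have h1 : ((a + a₀, (0 : F)) : F × F) ∈ line a b := by
        rw [hmem]; simp [hb]
      have h2 : ((a + a₀, (1 : F)) : F × F) ∈ line a b := by
        rw [hmem]; simp [hb]
      rw [h, hmem] at h1 h2
      simp only [if_neg hb'] at h1 h2
      exact one_ne_zero (α := F) (by linear_combination h1 - h2)
    · exfalso
      have h1 : ((a' + a₀, (0 : F)) : F × F) ∈ line a' b' := by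
        rw [hmem]; simp [hb']
      have h2 : ((a' + a₀, (1 : F)) : F × F) ∈ line a' b' := by
        rw [hmem]; simp [hb']
      rw [← h, hmem] at h1 h2
      simp only [if_neg hb] at h1 h2
      exact one_ne_zero (α := F) (by linear_combination h1 - h2)
    · have h1 : ((a, (0 : F)) : F × F) ∈ line a b := by
        rw [hmem]; simp [hb]
      have h2 : ((a + 1, b) : F × F) ∈ line a b := by
        rw [hmem]; simp only [if_neg hb]; ring
      rw [h, hmem] at h1 h2
      simp only [if_neg hb'] at h1 h2
      have hbb : b = b' := by linear_combination h1 - h2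
      refine ⟨?_, hbb⟩
      have h1' : b' * a = b' * a' := by linear_combination h1
      exact mul_left_cancel₀ hb' h1'
  set pt : F → F → F → F × F := fun a b c =>
    if b = 0 then (a + a₀, a₀ * c) else (a + c, b * c) with hpt
  refine ⟨(A + A) ×ˢ (A * A), (A ×ˢ A).image (fun x => line x.1 x.2), ?_, ?_, ?_, ?_⟩
  · intro l hl
    obtain ⟨⟨a, b⟩, _, rfl⟩ := Finset.mem_image.mp hl
    by_cases hb : b = 0
    · exact ⟨1, 0, a + a₀, by simp, by simp [hline, hb]⟩
    · refine ⟨b, -1, b * a, ?_, by simp [hline, hb]⟩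
      simp [Prod.ext_iff, hb]
  · rw [Finset.card_product]
  · have hinj : Function.Injective (fun x : F × F => line x.1 x.2) := by
      intro ⟨a, b⟩ ⟨a', b'⟩ h
      obtain ⟨h1, h2⟩ := lineInj a b a' b' h
      simp [Prod.ext_iff, h1, h2]
    rw [Finset.card_image_of_injective _ hinj, Finset.card_product, sq]
  · have hcard : (A ×ˢ A ×ˢ A).card = A.card ^ 3 := by
      simp [Finset.card_product]; ring
    rw [← hcard]
    apply Finset.card_le_card_of_injOn
      (f := fun x => (pt x.1 x.2.1 x.2.2, line x.1 x.2.1))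
    · rintro ⟨a, b, c⟩ hx
      simp only [Finset.mem_coe, Finset.mem_product] at hx
      obtain ⟨ha, hb, hc⟩ := hx
      rw [Finset.mem_coe, Finset.mem_filter, Finset.mem_product]
      refine ⟨⟨?_, Finset.mem_image_of_mem (fun x : F × F => line x.1 x.2)
          (show ((a, b) : F × F) ∈ A ×ˢ A from Finset.mem_product.mpr ⟨ha, hb⟩)⟩, ?_⟩
      · by_cases hb0 : b = 0 <;> simp only [hpt, if_pos, if_neg, hb0, if_true, ite_true,
          ite_false, Finset.mem_product]
        · exact ⟨Finset.add_mem_add ha ha₀A, Finset.mul_mem_mul ha₀A hc⟩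
        · exact ⟨Finset.add_mem_add ha hc, Finset.mul_mem_mul hb hc⟩
      · rw [hmem]
        by_cases hb0 : b = 0
        · simp [hpt, hb0]
        · simp only [hpt, if_neg hb0]; ring
    · rintro ⟨a, b, c⟩ hx ⟨a', b', c'⟩ hy heq
      simp only [Finset.mem_product, Finset.mem_coe] at hx hy
      obtain ⟨ha, hb, hc⟩ := hx
      obtain ⟨ha', hb', hc'⟩ := hy
      simp only [Prod.ext_iff] at heq
      obtain ⟨hpteq, hlineq⟩ := heq
      obtain ⟨haa, hbb⟩ := lineInj a b a' b' hlineq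
      subst haa; subst hbb
      refine Prod.ext rfl (Prod.ext rfl ?_)
      by_cases hb0 : b = 0
      · simp only [hpt, if_pos hb0, Prod.ext_iff] at hpteq
        rcases ha₀ with h0 | hall
        · exact mul_left_cancel₀ h0 hpteq.2
        · rw [hall c hc, hall c' hc']
      · simp only [hpt, if_neg hb0, Prod.ext_iff] at hpteq
        exact mul_left_cancel₀ hb0 hpteq.2
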